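/- Let A be a simple locally finite associative algebra over an algebraically closed field F and let {A_α}_{α∈Γ} be a perfect local system of A (each A_α satisfies A_α² = A_α). Then for each α ∈ Γ there exists α′ ∈ Γ such that rad(A_β) ∩ A_α = 0 for all β ≥ α′. -/

import Mathlib

/-- `B` is (the underlying submodule of) a subalgebra: closed under multiplication. -/
def IsSubalg {F A : Type*} [Field F] [NonUnitalRing A] [Module F A]
    (B : Submodule F A) : Prop :=
  ∀ x ∈ B, ∀ y ∈ B, x * y ∈ B

/-- `I` is a two-sided ideal of the subalgebra `B`. -/
def IsIdealIn {F A : Type*} [Field F] [NonUnitalRing A] [Module F A]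
    (I B : Submodule F A) : Prop :=
  I ≤ B ∧ ∀ b ∈ B, ∀ x ∈ I, b * x ∈ I ∧ x * b ∈ I

/-- Product of two submodules of a (possibly non-unital) algebra: the span of products. -/
def prodSub {F A : Type*} [Field F] [NonUnitalRing A] [Module F A]
    (M N : Submodule F A) : Submodule F A :=
  Submodule.span F {z : A | ∃ x ∈ M, ∃ y ∈ N, z = x * y}

/-- `pows B i` is the power `B^(i+1)`: `pows B 0 = B`, `pows B (i+1) = B * pows B i`. -/
def pows {F A : Type*} [Field F] [NonUnitalRing A] [Module F A]
    (B : Submodule F A) : ℕ → Submodule F A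
  | 0 => B
  | (i + 1) => prodSub B (pows B i)

/-- A family of finite-dimensional subalgebras is a local system: union is everything
and the family is directed under inclusion. -/
def IsLocalSystem {F A : Type*} [Field F] [NonUnitalRing A] [Module F A] {Γ : Type*}
    (S : Γ → Submodule F A) : Prop :=
  (∀ α, IsSubalg (S α)) ∧ (∀ α, FiniteDimensional F (S α)) ∧
    (∀ x : A, ∃ α, x ∈ S α) ∧ ∀ α β, ∃ γ, S α ≤ S γ ∧ S β ≤ S γ

/-- Every finite subset is contained in a finite-dimensional subalgebra. -/
def IsLocallyFinite (F A : Type*) [Field F] [NonUnitalRing A] [Module F A] : Prop :=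
  ∀ s : Finset A, ∃ B : Submodule F A, IsSubalg B ∧ FiniteDimensional F B ∧ ∀ x ∈ s, x ∈ B

/-- A (possibly non-unital) algebra is simple: `A² ≠ 0` and no nontrivial two-sided ideals. -/
def IsSimpleAlg (F A : Type*) [Field F] [NonUnitalRing A] [Module F A] : Prop :=
  (∃ x y : A, x * y ≠ 0) ∧ ∀ I : Submodule F A, IsIdealIn I ⊤ → I = ⊥ ∨ I = ⊤

/-- `R` is the radical of the finite-dimensional algebra `B`: its largest nilpotent ideal
(which coincides with the Jacobson radical for finite-dimensional algebras). -/
def IsRadicalOf {F A : Type*} [Field F] [NonUnitalRing A] [Module F A]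
    (R B : Submodule F A) : Prop :=
  IsIdealIn R B ∧ (∃ n, pows R n = ⊥) ∧
    ∀ I, IsIdealIn I B → (∃ n, pows I n = ⊥) → I ≤ R

/-- `I` is an ideal of codimension 1 in `B`. -/
def CodimOneIn {F A : Type*} [Field F] [NonUnitalRing A] [Module F A]
    (I B : Submodule F A) : Prop :=
  I ≤ B ∧ I ≠ B ∧ ∃ v : A, B ≤ I ⊔ Submodule.span F {v}

/-- The algebra `B` is 1-perfect: it has no two-sided ideal of codimension 1. -/
def Is1Perfect {F A : Type*} [Field F] [NonUnitalRing A] [Module F A]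
    (B : Submodule F A) : Prop :=
  ¬ ∃ I : Submodule F A, IsIdealIn I B ∧ CodimOneIn I B

/-- `Q` is the largest 1-perfect ideal (the 1-perfect radical) of the algebra `B`. -/
def IsLargest1PerfectIdealIn {F A : Type*} [Field F] [NonUnitalRing A] [Module F A]
    (Q B : Submodule F A) : Prop :=
  IsIdealIn Q B ∧ Is1Perfect Q ∧ ∀ I, IsIdealIn I B → Is1Perfect I → I ≤ Q

/-- `B` is a simple subalgebra: nonzero products and no nontrivial ideals of itself. -/
def IsSimpleSubalg {F A : Type*} [Field F] [NonUnitalRing A] [Module F A]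
    (B : Submodule F A) : Prop :=
  (∃ x ∈ B, ∃ y ∈ B, x * y ≠ 0) ∧ ∀ I : Submodule F A, IsIdealIn I B → I = ⊥ ∨ I = B

section Aux

variable {F A : Type*} [Field F] [NonUnitalRing A] [Module F A]
  [IsScalarTower F A A] [SMulCommClass F A A]

lemma mem_prodSub {M N : Submodule F A} {x y : A} (hx : x ∈ M) (hy : y ∈ N) :
    x * y ∈ prodSub M N :=
  Submodule.subset_span ⟨x, hx, y, hy, rfl⟩

lemma prodSub_le {M N P : Submodule F A} (h : ∀ x ∈ M, ∀ y ∈ N, x * y ∈ P) :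
    prodSub M N ≤ P := by
  apply Submodule.span_le.mpr
  rintro z ⟨x, hx, y, hy, rfl⟩
  exact h x hx y hy

lemma prodSub_mono {M M' N N' : Submodule F A} (h1 : M ≤ M') (h2 : N ≤ N') :
    prodSub M N ≤ prodSub M' N' :=
  prodSub_le fun x hx y hy => mem_prodSub (h1 hx) (h2 hy)

lemma prodSub_induction {M N : Submodule F A} {p : A → Prop} {z : A} (hz : z ∈ prodSub M N)
    (hmul : ∀ x ∈ M, ∀ y ∈ N, p (x * y)) (h0 : p 0)
    (hadd : ∀ a b, p a → p b → p (a + b))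
    (hsmul : ∀ (c : F) (a : A), p a → p (c • a)) : p z := by
  refine Submodule.span_induction ?_ h0 (fun a b _ _ ha hb => hadd a b ha hb)
    (fun c a _ ha => hsmul c a ha) hz
  rintro w ⟨x, hx, y, hy, rfl⟩
  exact hmul x hx y hy

lemma prodSub_assoc (M N P : Submodule F A) :
    prodSub (prodSub M N) P = prodSub M (prodSub N P) := by
  apply le_antisymm
  · refine prodSub_le fun z hz => ?_
    refine prodSub_induction
      (p := fun z => ∀ y ∈ P, z * y ∈ prodSub M (prodSub N P)) hz ?_ ?_ ?_ ?_
    · intro x hx n hn y' hy'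
      rw [mul_assoc]
      exact mem_prodSub hx (mem_prodSub hn hy')
    · intro y' hy'
      rw [zero_mul]; exact Submodule.zero_mem _
    · intro a b ha hb y' hy'
      rw [add_mul]; exact Submodule.add_mem _ (ha y' hy') (hb y' hy')
    · intro c a ha y' hy'
      rw [smul_mul_assoc]; exact Submodule.smul_mem _ c (ha y' hy')
  · refine prodSub_le fun x hx z hz => ?_
    refine prodSub_induction (p := fun z => x * z ∈ prodSub (prodSub M N) P) hz ?_ ?_ ?_ ?_
    · intro n hn y hy
      show x * (n * y) ∈ _
      rw [← mul_assoc]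
      exact mem_prodSub (mem_prodSub hx hn) hy
    · show x * 0 ∈ _
      rw [mul_zero]; exact Submodule.zero_mem _
    · intro a b ha hb
      show x * (a + b) ∈ _
      rw [mul_add]; exact Submodule.add_mem _ ha hb
    · intro c a ha
      show x * (c • a) ∈ _
      rw [mul_smul_comm]; exact Submodule.smul_mem _ c ha

lemma prodSub_sup_le (M N P : Submodule F A) :
    prodSub M (N ⊔ P) ≤ prodSub M N ⊔ prodSub M P := by
  refine prodSub_le fun x hx y hy => ?_
  obtain ⟨n, hn, p, hp, rfl⟩ := Submodule.mem_sup.mp hy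
  rw [mul_add]
  exact Submodule.add_mem _ (Submodule.mem_sup_left (mem_prodSub hx hn))
    (Submodule.mem_sup_right (mem_prodSub hx hp))

lemma sup_prodSub_le (M N P : Submodule F A) :
    prodSub (N ⊔ P) M ≤ prodSub N M ⊔ prodSub P M := by
  refine prodSub_le fun x hx y hy => ?_
  obtain ⟨n, hn, p, hp, rfl⟩ := Submodule.mem_sup.mp hx
  rw [add_mul]
  exact Submodule.add_mem _ (Submodule.mem_sup_left (mem_prodSub hn hy))
    (Submodule.mem_sup_right (mem_prodSub hp hy))

lemma pows_mono {B C : Submodule F A} (h : B ≤ C) : ∀ k, pows B k ≤ pows C k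
  | 0 => h
  | (k + 1) => prodSub_mono h (pows_mono h k)

lemma pows_le_self {B : Submodule F A} (hB : IsSubalg B) : ∀ k, pows B k ≤ B
  | 0 => le_rfl
  | (k + 1) => prodSub_le fun x hx y hy => hB x hx y (pows_le_self hB k hy)

lemma pows_add (B : Submodule F A) (a b : ℕ) :
    pows B (a + b + 1) = prodSub (pows B a) (pows B b) := by
  induction a with
  | zero => rw [Nat.zero_add]; rfl
  | succ a ih =>
    rw [show a + 1 + b + 1 = (a + b + 1) + 1 from by omega]
    show prodSub B (pows B (a + b + 1)) = _
    rw [ih, ← prodSub_assoc]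
    rfl

lemma pows_of_perfect {B : Submodule F A} (h : prodSub B B = B) : ∀ k, pows B k = B
  | 0 => rfl
  | (k + 1) => by
    show prodSub B (pows B k) = B
    rw [pows_of_perfect h k, h]

lemma ideal_inter {I B C : Submodule F A} (hI : IsIdealIn I C) (hBC : B ≤ C) (hB : IsSubalg B) :
    IsIdealIn (I ⊓ B) B := by
  refine ⟨inf_le_right, ?_⟩
  intro b hb x hx
  exact ⟨⟨(hI.2 b (hBC hb) x hx.1).1, hB b hb x hx.2⟩,
    ⟨(hI.2 b (hBC hb) x hx.1).2, hB x hx.2 b hb⟩⟩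

lemma ideal_sup {I J B : Submodule F A} (hI : IsIdealIn I B) (hJ : IsIdealIn J B) :
    IsIdealIn (I ⊔ J) B := by
  refine ⟨sup_le hI.1 hJ.1, ?_⟩
  intro b hb x hx
  obtain ⟨y, hy, z, hz, rfl⟩ := Submodule.mem_sup.mp hx
  constructor
  · rw [mul_add]
    exact Submodule.add_mem _ (Submodule.mem_sup_left (hI.2 b hb y hy).1)
      (Submodule.mem_sup_right (hJ.2 b hb z hz).1)
  · rw [add_mul]
    exact Submodule.add_mem _ (Submodule.mem_sup_left (hI.2 b hb y hy).2)
      (Submodule.mem_sup_right (hJ.2 b hb z hz).2)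

lemma pows_sup_le {I N B : Submodule F A} (hI : IsIdealIn I B) (hN : N ≤ B) (hB : IsSubalg B) :
    ∀ k, pows (I ⊔ N) k ≤ I ⊔ pows N k
  | 0 => le_rfl
  | (k + 1) => by
    have hNk : pows N k ≤ B := (pows_mono hN k).trans (pows_le_self hB k)
    have hBI : prodSub B I ≤ I := prodSub_le fun b hb x hx => (hI.2 b hb x hx).1
    have hIB : prodSub I B ≤ I := prodSub_le fun x hx b hb => (hI.2 b hb x hx).2
    calc pows (I ⊔ N) (k + 1) = prodSub (I ⊔ N) (pows (I ⊔ N) k) := rfl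
      _ ≤ prodSub (I ⊔ N) (I ⊔ pows N k) := prodSub_mono le_rfl (pows_sup_le hI hN hB k)
      _ ≤ prodSub (I ⊔ N) I ⊔ prodSub (I ⊔ N) (pows N k) := prodSub_sup_le _ _ _
      _ ≤ I ⊔ pows N (k + 1) := by
          refine sup_le ?_ ?_
          · exact le_sup_left.trans' ((prodSub_mono (sup_le hI.1 hN) le_rfl).trans hBI)
          · refine (sup_prodSub_le _ _ _).trans (sup_le ?_ ?_)
            · exact le_sup_left.trans' ((prodSub_mono le_rfl hNk).trans hIB)
            · exact le_sup_right

lemma nilpotent_sup {I N B : Submodule F A} (hB : IsSubalg B) (hI : IsIdealIn I B)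
    (hN : IsIdealIn N B) (hIm : ∃ m, pows I m = ⊥) (hNn : ∃ n, pows N n = ⊥) :
    ∃ k, pows (I ⊔ N) k = ⊥ := by
  obtain ⟨m, hm⟩ := hIm
  obtain ⟨n, hn⟩ := hNn
  have key : pows (I ⊔ N) n ≤ I := by
    have h := pows_sup_le hI hN.1 hB n
    rwa [hn, sup_bot_eq] at h
  have step : ∀ j, pows (I ⊔ N) (j * (n + 1) + n) ≤ pows I j := by
    intro j
    induction j with
    | zero => simp only [zero_mul, zero_add]; exact key
    | succ j ih =>
      rw [show (j + 1) * (n + 1) + n = n + (j * (n + 1) + n) + 1 from by ring, pows_add]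
      exact (prodSub_mono key ih).trans le_rfl
  exact ⟨m * (n + 1) + n, le_bot_iff.mp ((step m).trans hm.le)⟩

lemma exists_radical (B : Submodule F A) (hB : IsSubalg B) [FiniteDimensional F B] :
    ∃ R, IsRadicalOf R B := by
  classical
  let T : Set ℕ := {n | ∃ I : Submodule F A,
    IsIdealIn I B ∧ (∃ k, pows I k = ⊥) ∧ Module.finrank F I = n}
  have hbot : IsIdealIn (⊥ : Submodule F A) B := by
    refine ⟨bot_le, ?_⟩
    intro b hb x hx
    rw [Submodule.mem_bot] at hx
    subst hx
    simp [Submodule.mem_bot]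
  have hne : T.Nonempty := ⟨_, ⊥, hbot, ⟨0, rfl⟩, rfl⟩
  have hbdd : BddAbove T := by
    refine ⟨Module.finrank F B, ?_⟩
    rintro n ⟨I, hI, _, rfl⟩
    exact LinearMap.finrank_le_finrank_of_injective (Submodule.inclusion_injective hI.1)
  obtain ⟨R, hRid, hRnil, hRrank⟩ := Nat.sSup_mem hne hbdd
  refine ⟨R, hRid, hRnil, ?_⟩
  intro I hIid hInil
  have hsup : IsIdealIn (I ⊔ R) B := ideal_sup hIid hRid
  have hsupnil : ∃ k, pows (I ⊔ R) k = ⊥ := nilpotent_sup hB hIid hRid hInil hRnil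
  haveI : FiniteDimensional F (I ⊔ R : Submodule F A) :=
    Submodule.finiteDimensional_of_le hsup.1
  have hle : Module.finrank F (I ⊔ R : Submodule F A) ≤ Module.finrank F R := by
    rw [hRrank]
    exact le_csSup hbdd ⟨I ⊔ R, hsup, hsupnil, rfl⟩
  have heq : R = I ⊔ R := Submodule.eq_of_le_of_finrank_le le_sup_right hle
  exact heq ▸ le_sup_left

lemma finset_in_system {Γ : Type*} {S : Γ → Submodule F A} (hS : IsLocalSystem S)
    (s : Finset A) (γ₀ : Γ) : ∃ γ, S γ₀ ≤ S γ ∧ ∀ x ∈ s, x ∈ S γ := by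
  classical
  induction s using Finset.induction with
  | empty => exact ⟨γ₀, le_rfl, by simp⟩
  | @insert a s _ ih =>
    obtain ⟨γ, hγ, hmem⟩ := ih
    obtain ⟨δ, hδ⟩ := hS.2.2.1 a
    obtain ⟨ε, h1, h2⟩ := hS.2.2.2 γ δ
    refine ⟨ε, hγ.trans h1, ?_⟩
    intro x hx
    rcases Finset.mem_insert.mp hx with rfl | h
    · exact h2 hδ
    · exact h1 (hmem x h)

end Aux

theorem perfect_system_eventually_trivial_radical_intersection {F A : Type*} [Field F] [IsAlgClosed F] [NonUnitalRing A] [Module F A]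
    [IsScalarTower F A A] [SMulCommClass F A A]
    (hsimple : IsSimpleAlg F A) (hlf : IsLocallyFinite F A)
    {Γ : Type*} (S : Γ → Submodule F A) (hS : IsLocalSystem S)
    (hperf : ∀ α, prodSub (S α) (S α) = S α) :
    ∀ α, ∃ α', ∀ β, S α' ≤ S β → ∀ R, IsRadicalOf R (S β) → R ⊓ S α = ⊥ := by
  intro α
  classical
  obtain ⟨hsub, hfd, hcov, hdir⟩ := hS
  by_cases hP : ∃ β R, S α ≤ S β ∧ IsRadicalOf R (S β)
  · let T : Set ℕ := {n | ∃ β R, S α ≤ S β ∧ IsRadicalOf R (S β) ∧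
      Module.finrank F (R ⊓ S α : Submodule F A) = n}
    have hTne : T.Nonempty := by
      obtain ⟨β, R, h1, h2⟩ := hP
      exact ⟨_, β, R, h1, h2, rfl⟩
    obtain ⟨β₀, R₀, hαβ₀, hR₀, hrank⟩ := Nat.sInf_mem hTne
    refine ⟨β₀, ?_⟩
    haveI := hfd α
    haveI : FiniteDimensional F (R₀ ⊓ S α : Submodule F A) :=
      Submodule.finiteDimensional_of_le inf_le_right
    have hkey : ∀ β R, S β₀ ≤ S β → IsRadicalOf R (S β) → R ⊓ S α = R₀ ⊓ S α := by
      intro β R hβ hR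
      have hαβ : S α ≤ S β := hαβ₀.trans hβ
      have hid : IsIdealIn (R ⊓ S β₀) (S β₀) := ideal_inter hR.1 hβ (hsub β₀)
      have hnil : ∃ k, pows (R ⊓ S β₀) k = ⊥ := by
        obtain ⟨k, hk⟩ := hR.2.1
        exact ⟨k, le_bot_iff.mp (hk ▸ pows_mono inf_le_left k)⟩
      have hle : R ⊓ S β₀ ≤ R₀ := hR₀.2.2 _ hid hnil
      have hle2 : R ⊓ S α ≤ R₀ ⊓ S α := fun x hx => ⟨hle ⟨hx.1, hαβ₀ hx.2⟩, hx.2⟩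
      have hmemT : Module.finrank F (R ⊓ S α : Submodule F A) ∈ T := ⟨β, R, hαβ, hR, rfl⟩
      refine Submodule.eq_of_le_of_finrank_le hle2 ?_
      rw [hrank]
      exact Nat.sInf_le hmemT
    have hDbot : R₀ ⊓ S α = ⊥ := by
      by_contra hD
      set D := R₀ ⊓ S α with hDdef
      let G : Set A := {z | ∃ d ∈ D, z = d ∨ (∃ a, z = a * d) ∨ (∃ b, z = d * b) ∨
        (∃ a b, z = a * d * b)}
      let J := Submodule.span F G
      have hDJ : D ≤ J := fun d hd => Submodule.subset_span ⟨d, hd, Or.inl rfl⟩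
      have hGmul : ∀ c : A, ∀ z ∈ G, c * z ∈ G ∧ z * c ∈ G := by
        rintro c z ⟨d, hd, rfl | ⟨a, rfl⟩ | ⟨b, rfl⟩ | ⟨a, b, rfl⟩⟩
        · exact ⟨⟨z, hd, Or.inr (Or.inl ⟨c, rfl⟩)⟩,
            ⟨z, hd, Or.inr (Or.inr (Or.inl ⟨c, rfl⟩))⟩⟩
        · exact ⟨⟨d, hd, Or.inr (Or.inl ⟨c * a, by rw [mul_assoc]⟩)⟩,
            ⟨d, hd, Or.inr (Or.inr (Or.inr ⟨a, c, rfl⟩))⟩⟩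
        · exact ⟨⟨d, hd, Or.inr (Or.inr (Or.inr ⟨c, b, by rw [mul_assoc]⟩))⟩,
            ⟨d, hd, Or.inr (Or.inr (Or.inl ⟨b * c, by rw [mul_assoc]⟩))⟩⟩
        · exact ⟨⟨d, hd, Or.inr (Or.inr (Or.inr ⟨c * a, b, by simp [mul_assoc]⟩))⟩,
            ⟨d, hd, Or.inr (Or.inr (Or.inr ⟨a, b * c, by simp [mul_assoc]⟩))⟩⟩
      have hJmul : ∀ b : A, ∀ x ∈ J, b * x ∈ J ∧ x * b ∈ J := by
        intro b x hx
        refine Submodule.span_induction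
          (p := fun x _ => b * x ∈ J ∧ x * b ∈ J) ?_ ?_ ?_ ?_ hx
        · intro z hz
          obtain ⟨h1, h2⟩ := hGmul b z hz
          exact ⟨Submodule.subset_span h1, Submodule.subset_span h2⟩
        · constructor <;> simp [Submodule.zero_mem]
        · intro y z _ _ hy hz
          constructor
          · rw [mul_add]; exact Submodule.add_mem _ hy.1 hz.1
          · rw [add_mul]; exact Submodule.add_mem _ hy.2 hz.2
        · intro c y _ hy
          constructor
          · rw [mul_smul_comm]; exact Submodule.smul_mem _ c hy.1
          · rw [smul_mul_assoc]; exact Submodule.smul_mem _ c hy.2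
      have hJideal : IsIdealIn J ⊤ := ⟨le_top, fun b _ x hx => hJmul b x hx⟩
      rcases hsimple.2 J hJideal with hJbot | hJtop
      · exact hD (le_bot_iff.mp (hJbot ▸ hDJ))
      · have hfg : (S α).FG := (Submodule.fg_iff_finiteDimensional _).mpr (hfd α)
        obtain ⟨s, hs⟩ := hfg
        have hvJ : ∀ v ∈ s, ∃ t : Finset A, ↑t ⊆ G ∧ v ∈ Submodule.span F (↑t : Set A) := by
          intro v _
          have hv : v ∈ J := by rw [hJtop]; trivial
          exact Submodule.mem_span_finite_of_mem_span hv
        choose t ht1 ht2 using hvJ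
        let Tt : Finset A := s.attach.biUnion (fun v => t v v.2)
        have hTG : ↑Tt ⊆ G := by
          intro z hz
          simp only [Tt, Finset.coe_biUnion, Set.mem_iUnion, Finset.mem_coe] at hz
          obtain ⟨v, hv, hz⟩ := hz
          exact ht1 v _ hz
        have hsTt : S α ≤ Submodule.span F (↑Tt : Set A) := by
          rw [← hs]
          refine Submodule.span_le.mpr fun v hv => ?_
          refine Submodule.span_mono ?_ (ht2 v hv)
          intro z hz
          simp only [Tt, Finset.coe_biUnion, Set.mem_iUnion, Finset.mem_coe]
          exact ⟨⟨v, hv⟩, Finset.mem_attach _ _, hz⟩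
        have hwit : ∀ z ∈ Tt, ∃ u w : A, ∀ (C R' : Submodule F A),
            IsIdealIn R' C → D ≤ R' → u ∈ C → w ∈ C → z ∈ R' := by
          intro z hz
          obtain ⟨d, hd, hcase⟩ := hTG hz
          rcases hcase with rfl | ⟨a, rfl⟩ | ⟨b, rfl⟩ | ⟨a, b, rfl⟩
          · exact ⟨0, 0, fun C R' _ hDR' _ _ => hDR' hd⟩
          · exact ⟨a, 0, fun C R' hR' hDR' hu _ => (hR'.2 a hu d (hDR' hd)).1⟩
          · exact ⟨b, 0, fun C R' hR' hDR' hu _ => (hR'.2 b hu d (hDR' hd)).2⟩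
          · exact ⟨a, b, fun C R' hR' hDR' hu hw =>
              (hR'.2 b hw (a * d) (hR'.2 a hu d (hDR' hd)).1).2⟩
        choose u w hu using hwit
        let E : Finset A := Tt.attach.image (fun z => u z.1 z.2) ∪
          Tt.attach.image (fun z => w z.1 z.2)
        obtain ⟨β₁, hβ₀β₁, hE⟩ := finset_in_system ⟨hsub, hfd, hcov, hdir⟩ E β₀
        haveI := hfd β₁
        obtain ⟨R₁, hR₁⟩ := exists_radical (S β₁) (hsub β₁)
        have hk1 : R₁ ⊓ S α = D := hkey β₁ R₁ hβ₀β₁ hR₁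
        have hDR₁ : D ≤ R₁ := by
          intro x hx
          have hx' : x ∈ R₁ ⊓ S α := by rw [hk1]; exact hx
          exact hx'.1
        have hTR₁ : ∀ z ∈ Tt, z ∈ R₁ := by
          intro z hz
          refine hu z hz (S β₁) R₁ hR₁.1 hDR₁ ?_ ?_
          · exact hE _ (Finset.mem_union_left _
              (Finset.mem_image_of_mem _ (Finset.mem_attach _ ⟨z, hz⟩)))
          · exact hE _ (Finset.mem_union_right _
              (Finset.mem_image_of_mem _ (Finset.mem_attach _ ⟨z, hz⟩)))
        have hSαR₁ : S α ≤ R₁ :=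
          hsTt.trans (Submodule.span_le.mpr fun z hz => hTR₁ z (Finset.mem_coe.mp hz))
        have hSαD : S α ≤ D := by
          intro x hx
          rw [← hk1]
          exact ⟨hSαR₁ hx, hx⟩
        obtain ⟨k, hk⟩ := hR₁.2.1
        have hb : pows (S α) k ≤ ⊥ := hk ▸ pows_mono hSαR₁ k
        rw [pows_of_perfect (hperf α) k] at hb
        exact hD (le_bot_iff.mp ((hDdef ▸ inf_le_right : D ≤ S α).trans hb))
    intro β hβ R hR
    rw [hkey β R hβ hR]
    exact hDbot
  · exact ⟨α, fun β hβ R hR => absurd ⟨β, R, hβ, hR⟩ hP⟩
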